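/- arXiv:1211.6032 — 5 statements merged into one kernel-verified Lean document; each statement's English description precedes it below -/
import Mathlib

section
/- Let H₁, H₂, H₃ be complex Hilbert spaces, and let T : H₁ → H₂ and S : H₂ → H₃ be closed, densely defined (possibly unbounded) linear operators such that T(Dom T) ⊆ Dom S and S(Tζ) = 0 for all ζ ∈ Dom T. Suppose there exists a constant C > 0 such that ‖Sζ‖² + ‖T*ζ‖² ≥ C‖ζ‖² for all ζ ∈ Dom S ∩ Dom T*, where T* denotes the Hilbert space adjoint of T. Then for every ψ ∈ Dom S with Sψ = 0 there exists ξ ∈ Dom T with Tξ = ψ and ‖ξ‖² ≤ (1/C)·‖ψ‖². In particular, ker S = range T. -/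
open scoped ComplexConjugate
local notation "⟪" x ", " y "⟫" => @inner ℂ _ _ x y

/-- A closed densely defined operator: if `⟪ξ, T†ζ⟫ = ⟪ψ, ζ⟫` for all `ζ ∈ Dom T†`,
then `(ξ, ψ)` lies in the graph of `T`. -/
lemma aux_mem_graph_of_inner {H₁ H₂ : Type*}
    [NormedAddCommGroup H₁] [InnerProductSpace ℂ H₁] [CompleteSpace H₁]
    [NormedAddCommGroup H₂] [InnerProductSpace ℂ H₂] [CompleteSpace H₂]
    (T : H₁ →ₗ.[ℂ] H₂) (hT_dense : Dense (T.domain : Set H₁)) (hT_closed : T.IsClosed)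
    (ξ : H₁) (ψ : H₂)
    (h : ∀ ζ : T.adjoint.domain, ⟪ξ, (T.adjoint ζ : H₁)⟫ = ⟪ψ, (ζ : H₂)⟫) :
    (ξ, ψ) ∈ T.graph := by
  set e := WithLp.prodContinuousLinearEquiv 2 ℂ H₁ H₂ with he
  set G' : Submodule ℂ (WithLp 2 (H₁ × H₂)) :=
    T.graph.comap ((e.toLinearEquiv : WithLp 2 (H₁ × H₂) ≃ₗ[ℂ] H₁ × H₂) : WithLp 2 (H₁ × H₂) →ₗ[ℂ] H₁ × H₂) with hG'
  have hG'_closed : IsClosed (G' : Set (WithLp 2 (H₁ × H₂))) := by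
    have : (G' : Set (WithLp 2 (H₁ × H₂))) = e ⁻¹' (T.graph : Set (H₁ × H₂)) := rfl
    rw [this]
    exact hT_closed.preimage e.continuous
  haveI : CompleteSpace G' := hG'_closed.completeSpace_coe
  set w₀ : WithLp 2 (H₁ × H₂) := e.symm (ξ, ψ) with hw₀
  have hmem : w₀ ∈ G'ᗮᗮ := by
    rw [Submodule.mem_orthogonal]
    intro u hu
    -- decompose u
    set a : H₁ := (e u).1 with ha
    set b : H₂ := (e u).2 with hb
    have key : ∀ x : T.domain, ⟪(x : H₁), a⟫ + ⟪(T x : H₂), b⟫ = 0 := by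
      intro x
      have hv : e.symm ((x : H₁), (T x : H₂)) ∈ G' := by
        simp only [hG', Submodule.mem_comap]
        have : (e.toLinearEquiv) (e.symm ((x : H₁), (T x : H₂)))
            = ((x : H₁), (T x : H₂)) := e.apply_symm_apply _
        change (e.toLinearEquiv) (e.symm ((x : H₁), (T x : H₂))) ∈ T.graph
        rw [this]
        exact T.mem_graph x
      have := (Submodule.mem_orthogonal G' u).mp hu _ hv
      rwa [WithLp.prod_inner_apply] at this
    have hbmem : b ∈ T.adjoint.domain := by
      apply LinearPMap.mem_adjoint_domain_of_exists
      refine ⟨-a, fun x => ?_⟩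
      have hx := key x
      have : ⟪(T x : H₂), b⟫ = -⟪(x : H₁), a⟫ := by linear_combination hx
      rw [← inner_conj_symm b (T x), this, inner_neg_left, map_neg, inner_conj_symm]
    have hTb : T.adjoint ⟨b, hbmem⟩ = -a := by
      apply LinearPMap.adjoint_apply_eq hT_dense
      intro x
      have hx := key x
      have : ⟪(T x : H₂), b⟫ = -⟪(x : H₁), a⟫ := by linear_combination hx
      rw [inner_neg_left, ← inner_conj_symm b (T x), this, map_neg, inner_conj_symm]
    -- now compute ⟪u, w₀⟫
    have hcalc : ⟪w₀, u⟫ = ⟪ξ, a⟫ + ⟪ψ, b⟫ := by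
      rw [WithLp.prod_inner_apply]
      congr 1
    have hξa : ⟪ξ, a⟫ = -⟪ψ, b⟫ := by
      have := h ⟨b, hbmem⟩
      rw [hTb] at this
      rw [← neg_neg a, inner_neg_right, this]
    rw [← inner_conj_symm u w₀, hcalc, hξa, neg_add_cancel, map_zero]
  rw [Submodule.orthogonal_orthogonal] at hmem
  have h2 : (e.toLinearEquiv) w₀ ∈ T.graph := hmem
  have h3 : (e.toLinearEquiv) w₀ = (ξ, ψ) := e.apply_symm_apply _
  rwa [h3] at h2



/-- **Hörmander's existence theorem from an a priori estimate.**
Let `T : H₁ → H₂` and `S : H₂ → H₃` be closed, densely defined operators between complex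
Hilbert spaces with `S ∘ T = 0`.  If `‖Sζ‖² + ‖T*ζ‖² ≥ C‖ζ‖²` on `Dom S ∩ Dom T*` for some
`C > 0`, then every `ψ ∈ ker S` is of the form `ψ = Tξ` with `‖ξ‖² ≤ (1/C)‖ψ‖²`;
in particular `ker S = range T`. -/
theorem index_thm_quasi_tori_stmt0
    {H₁ H₂ H₃ : Type*}
    [NormedAddCommGroup H₁] [InnerProductSpace ℂ H₁] [CompleteSpace H₁]
    [NormedAddCommGroup H₂] [InnerProductSpace ℂ H₂] [CompleteSpace H₂]
    [NormedAddCommGroup H₃] [InnerProductSpace ℂ H₃] [CompleteSpace H₃]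
    (T : H₁ →ₗ.[ℂ] H₂) (S : H₂ →ₗ.[ℂ] H₃)
    (hT_dense : Dense (T.domain : Set H₁)) (hT_closed : T.IsClosed)
    (hS_dense : Dense (S.domain : Set H₂)) (hS_closed : S.IsClosed)
    (hST : ∀ ζ : T.domain, ∃ h : (T ζ : H₂) ∈ S.domain, S ⟨T ζ, h⟩ = 0)
    (C : ℝ) (hC : 0 < C)
    (hest : ∀ (ζ : H₂) (hζS : ζ ∈ S.domain) (hζT : ζ ∈ T.adjoint.domain),
      C * ‖ζ‖ ^ 2 ≤ ‖S ⟨ζ, hζS⟩‖ ^ 2 + ‖T.adjoint ⟨ζ, hζT⟩‖ ^ 2) :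
    (∀ ψ : S.domain, S ψ = 0 →
      ∃ ξ : T.domain, (T ξ : H₂) = (ψ : H₂) ∧ ‖(ξ : H₁)‖ ^ 2 ≤ (1 / C) * ‖(ψ : H₂)‖ ^ 2)
    ∧ {ψ : H₂ | ∃ hψ : ψ ∈ S.domain, S ⟨ψ, hψ⟩ = 0}
        = {ψ : H₂ | ∃ ξ : T.domain, (T ξ : H₂) = ψ} := by
  classical
  -- the kernel of `S` as a closed submodule of `H₂`
  set K : Submodule ℂ H₂ := S.graph.comap (LinearMap.inl ℂ H₂ H₃) with hK
  have hKmem : ∀ x : H₂, x ∈ K ↔ ∃ hx : x ∈ S.domain, S ⟨x, hx⟩ = 0 := by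
    intro x
    constructor
    · intro hx
      rw [hK, Submodule.mem_comap, LinearPMap.mem_graph_iff] at hx
      obtain ⟨y, hy1, hy2⟩ := hx
      simp only [LinearMap.inl_apply] at hy1 hy2
      refine ⟨hy1 ▸ y.2, ?_⟩
      have : (⟨x, hy1 ▸ y.2⟩ : S.domain) = y := Subtype.ext hy1.symm
      rw [this, hy2]
    · rintro ⟨hx, hSx⟩
      rw [hK, Submodule.mem_comap, LinearPMap.mem_graph_iff]
      exact ⟨⟨x, hx⟩, rfl, hSx⟩
  have hK_closed : IsClosed (K : Set H₂) := by
    have : (K : Set H₂) = (fun x : H₂ => ((x, (0 : H₃)) : H₂ × H₃)) ⁻¹' (S.graph : Set (H₂ × H₃)) := rfl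
    rw [this]
    exact hS_closed.preimage (by fun_prop)
  haveI : CompleteSpace K := hK_closed.completeSpace_coe
  -- the range of `T` is contained in `K`
  have hRange : ∀ x : T.domain, (T x : H₂) ∈ K := fun x => (hKmem _).mpr (hST x)
  -- elements of `Kᗮ` are in the domain of the adjoint, with zero value
  have hperp : ∀ v : H₂, v ∈ Kᗮ →
      ∃ hv : v ∈ T.adjoint.domain, T.adjoint ⟨v, hv⟩ = 0 := by
    intro v hv
    have hinner : ∀ x : T.domain, ⟪(0 : H₁), (x : H₁)⟫ = ⟪v, (T x : H₂)⟫ := by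
      intro x
      rw [inner_zero_left]
      exact (Submodule.inner_left_of_mem_orthogonal (hRange x) hv).symm
    have hvmem : v ∈ T.adjoint.domain := LinearPMap.mem_adjoint_domain_of_exists v ⟨0, hinner⟩
    exact ⟨hvmem, LinearPMap.adjoint_apply_eq hT_dense _ hinner⟩
  -- the key estimate for the linear functional
  have hbound : ∀ ψ : H₂, ψ ∈ K → ∀ ζ : T.adjoint.domain,
      ‖⟪ψ, (ζ : H₂)⟫‖ ≤ (‖ψ‖ / Real.sqrt C) * ‖(T.adjoint ζ : H₁)‖ := by
    intro ψ hψ ζ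
    set ζ₁ : H₂ := (K.orthogonalProjectionOnto (ζ : H₂) : H₂) with hζ₁
    set ζ₂ : H₂ := (ζ : H₂) - ζ₁ with hζ₂def
    have hζ₂ : ζ₂ ∈ Kᗮ := Submodule.sub_starProjection_mem_orthogonal (K := K) _
    obtain ⟨hζ₂T, hζ₂0⟩ := hperp ζ₂ hζ₂
    have hζ₁T : ζ₁ ∈ T.adjoint.domain := by
      have h : ζ₁ = (ζ : H₂) - ζ₂ := by rw [hζ₂def]; abel
      rw [h]
      exact Submodule.sub_mem _ ζ.2 hζ₂T
    have hζ₁val : T.adjoint ⟨ζ₁, hζ₁T⟩ = T.adjoint ζ := by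
      have hsplit : (⟨ζ₁, hζ₁T⟩ : T.adjoint.domain) = ζ - ⟨ζ₂, hζ₂T⟩ := by
        apply Subtype.ext
        simp [hζ₂def]
      rw [hsplit, LinearPMap.map_sub, hζ₂0, sub_zero]
    have hζ₁K : ζ₁ ∈ K := (K.orthogonalProjectionOnto (ζ : H₂)).2
    obtain ⟨hζ₁S, hζ₁S0⟩ := (hKmem ζ₁).mp hζ₁K
    have hest1 := hest ζ₁ hζ₁S hζ₁T
    rw [hζ₁S0, hζ₁val] at hest1
    simp only [norm_zero] at hest1
    have h1 : ‖ζ₁‖ ≤ ‖(T.adjoint ζ : H₁)‖ / Real.sqrt C := by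
      rw [le_div_iff₀ (Real.sqrt_pos.mpr hC)]
      have h2 : (‖ζ₁‖ * Real.sqrt C) ^ 2 ≤ ‖(T.adjoint ζ : H₁)‖ ^ 2 := by
        rw [mul_pow, Real.sq_sqrt hC.le]
        nlinarith [hest1]
      have h3 := Real.sqrt_le_sqrt h2
      rwa [Real.sqrt_sq (by positivity), Real.sqrt_sq (norm_nonneg _)] at h3
    have hsplit : ⟪ψ, (ζ : H₂)⟫ = ⟪ψ, ζ₁⟫ + ⟪ψ, ζ₂⟫ := by
      rw [← inner_add_right]
      congr 1
      rw [hζ₂def]; abel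
    have hzero : ⟪ψ, ζ₂⟫ = 0 := Submodule.inner_right_of_mem_orthogonal hψ hζ₂
    rw [hsplit, hzero, add_zero]
    calc ‖⟪ψ, ζ₁⟫‖ ≤ ‖ψ‖ * ‖ζ₁‖ := norm_inner_le_norm _ _
      _ ≤ ‖ψ‖ * (‖(T.adjoint ζ : H₁)‖ / Real.sqrt C) := by gcongr
      _ = (‖ψ‖ / Real.sqrt C) * ‖(T.adjoint ζ : H₁)‖ := by ring
  -- the main existence statement
  have hmain : ∀ ψ : H₂, ψ ∈ K →
      ∃ ξ : T.domain, (T ξ : H₂) = ψ ∧ ‖(ξ : H₁)‖ ^ 2 ≤ (1 / C) * ‖ψ‖ ^ 2 := by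
    intro ψ hψ
    set M : ℝ := ‖ψ‖ / Real.sqrt C with hM
    have hM0 : 0 ≤ M := by positivity
    set A : T.adjoint.domain →ₗ[ℂ] H₁ := T.adjoint.toFun with hA
    set q : T.adjoint.domain →ₗ[ℂ] ℂ :=
      ((innerSL ℂ ψ).toLinearMap).comp ((T.adjoint.domain).subtype) with hqdef
    have hq : ∀ ζ : T.adjoint.domain, q ζ = ⟪ψ, (ζ : H₂)⟫ := fun ζ => rfl
    have hker : LinearMap.ker A ≤ LinearMap.ker q := by
      intro ζ hζ
      rw [LinearMap.mem_ker] at hζ ⊢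
      have hb := hbound ψ hψ ζ
      have h0 : ‖(T.adjoint ζ : H₁)‖ = 0 := by
        rw [show (T.adjoint ζ : H₁) = A ζ from rfl, hζ, norm_zero]
      rw [h0, mul_zero] at hb
      rw [hq]
      exact norm_le_zero_iff.mp hb
    set f₀ : LinearMap.range A →ₗ[ℂ] ℂ :=
      ((LinearMap.ker A).liftQ q hker).comp A.quotKerEquivRange.symm.toLinearMap with hf₀
    have hf₀app : ∀ ζ : T.adjoint.domain,
        f₀ ⟨A ζ, LinearMap.mem_range_self A ζ⟩ = ⟪ψ, (ζ : H₂)⟫ := by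
      intro ζ
      have h1 : A.quotKerEquivRange.symm ⟨A ζ, LinearMap.mem_range_self A ζ⟩
          = (LinearMap.ker A).mkQ ζ := A.quotKerEquivRange_symm_apply_image ζ _
      rw [hf₀]
      simp only [LinearMap.comp_apply, LinearEquiv.coe_toLinearMap, h1]
      rw [show (LinearMap.ker A).mkQ ζ = Submodule.Quotient.mk ζ from rfl,
        Submodule.liftQ_apply, hq]
    have hf₀bound : ∀ η : LinearMap.range A, ‖f₀ η‖ ≤ M * ‖η‖ := by
      rintro ⟨η, hη⟩
      obtain ⟨ζ, rfl⟩ := hη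
      calc ‖f₀ ⟨A ζ, LinearMap.mem_range_self A ζ⟩‖ = ‖⟪ψ, (ζ : H₂)⟫‖ := by rw [hf₀app]
        _ ≤ M * ‖(T.adjoint ζ : H₁)‖ := hbound ψ hψ ζ
        _ = M * ‖(⟨A ζ, LinearMap.mem_range_self A ζ⟩ : LinearMap.range A)‖ := rfl
    set F := f₀.mkContinuous M hf₀bound with hF
    obtain ⟨g, hg_ext, hg_norm⟩ := exists_extension_norm_eq (LinearMap.range A) F
    set ξ : H₁ := (InnerProductSpace.toDual ℂ H₁).symm g with hξ
    have hξ_inner : ∀ ζ : T.adjoint.domain, ⟪ξ, (T.adjoint ζ : H₁)⟫ = ⟪ψ, (ζ : H₂)⟫ := by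
      intro ζ
      rw [hξ, InnerProductSpace.toDual_symm_apply]
      have h2 := hg_ext ⟨A ζ, LinearMap.mem_range_self A ζ⟩
      rw [show ((⟨A ζ, LinearMap.mem_range_self A ζ⟩ : LinearMap.range A) : H₁)
          = (T.adjoint ζ : H₁) from rfl] at h2
      rw [h2]
      exact hf₀app ζ
    have hξ_norm : ‖ξ‖ ≤ M := by
      rw [hξ, LinearIsometryEquiv.norm_map, hg_norm]
      exact f₀.mkContinuous_norm_le hM0 hf₀bound
    have hgraph := aux_mem_graph_of_inner T hT_dense hT_closed ξ ψ hξ_inner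
    rw [LinearPMap.mem_graph_iff] at hgraph
    obtain ⟨ξ', hξ'1, hξ'2⟩ := hgraph
    refine ⟨ξ', hξ'2, ?_⟩
    rw [show ((ξ' : H₁)) = ξ from hξ'1]
    calc ‖ξ‖ ^ 2 ≤ M ^ 2 := pow_le_pow_left₀ (norm_nonneg ξ) hξ_norm 2
      _ = (1 / C) * ‖ψ‖ ^ 2 := by
        rw [hM, div_pow, Real.sq_sqrt hC.le]; ring
  constructor
  · intro ψ hSψ
    exact hmain (ψ : H₂) ((hKmem _).mpr ⟨ψ.2, hSψ⟩)
  · ext x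
    simp only [Set.mem_setOf_eq]
    constructor
    · intro hx
      obtain ⟨ξ, hξ1, _⟩ := hmain x ((hKmem x).mpr hx)
      exact ⟨ξ, hξ1⟩
    · rintro ⟨ξ, rfl⟩
      exact hST ξ
end

section
/- Let 0 < m < n, and let Γ ⊆ ℂⁿ be the ℤ-span of the standard basis vectors e₁,…,e_{n−m} of ℂ^{n−m} × {0} together with 2m further vectors γ₁,…,γ_{2m} such that: (i) every element of Γ has real E-component, and (ii) the F-components of γ₁,…,γ_{2m} form an ℝ-basis of ℂ^m (viewed as a 2m-dimensional real vector space). Let X = ℂⁿ/Γ be the quotient topological group and π : ℂⁿ → X the quotient map. Then the function z = (u,v) ↦ ‖Im u‖² (Euclidean 2-norm of the imaginary part of the E-component) is Γ-invariant, hence induces a continuous function φ : X → ℝ≥0; and for every c ≥ 0 the sublevel set {x ∈ X : φ(x) ≤ c} is compact. In particular the open sets K_c := {x ∈ X : φ(x) < c}, c > 0, form an exhaustive family of relatively compact open subsets of X. -/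
/-- On a Cousin-type quasi-torus `X = ℂⁿ/Γ` (with `Γ` generated by `e₁,…,e_{n-m}` and `2m`
vectors whose `F`-components form an `ℝ`-basis of `ℂ^m`, all elements of `Γ` having real
`E`-component), the function `z = (u,v) ↦ ‖Im u‖²` is `Γ`-invariant; the induced continuous
function `φ : X → ℝ≥0` has compact sublevel sets `{φ ≤ c}`, so that the open sets
`K_c = {φ < c}`, `c > 0`, form an exhaustive family of relatively compact open subsets. -/
theorem index_thm_quasi_tori_stmt6
    (n m : ℕ) (hm : 0 < m) (hmn : m < n)
    (γ : Fin (2 * m) → (Fin (n - m) → ℂ) × (Fin m → ℂ))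
    (Γ : AddSubgroup ((Fin (n - m) → ℂ) × (Fin m → ℂ)))
    (hΓ : Γ = AddSubgroup.closure
      (Set.range (fun i : Fin (n - m) =>
        (((Pi.single i 1 : Fin (n - m) → ℂ), (0 : Fin m → ℂ))
          : (Fin (n - m) → ℂ) × (Fin m → ℂ)))
        ∪ Set.range γ))
    (hreal : ∀ g ∈ Γ, ∀ i, (g.1 i).im = 0)
    (hli : LinearIndependent ℝ (fun j => (γ j).2))
    (hspan : Submodule.span ℝ (Set.range (fun j => (γ j).2)) = ⊤) :
    (∀ z : (Fin (n - m) → ℂ) × (Fin m → ℂ), ∀ g ∈ Γ,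
        (∑ i, ((z + g).1 i).im ^ 2) = ∑ i, (z.1 i).im ^ 2)
    ∧ ∃ φ : ((Fin (n - m) → ℂ) × (Fin m → ℂ)) ⧸ Γ → ℝ,
        Continuous φ
        ∧ (∀ z, φ (QuotientAddGroup.mk z) = ∑ i, (z.1 i).im ^ 2)
        ∧ (∀ x, 0 ≤ φ x)
        ∧ (∀ c : ℝ, 0 ≤ c → IsCompact {x | φ x ≤ c})
        ∧ (∀ c : ℝ, 0 < c →
            IsOpen {x | φ x < c} ∧ IsCompact (closure {x | φ x < c}))
        ∧ (⋃ c ∈ Set.Ioi (0 : ℝ), {x | φ x < c}) = Set.univ := by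
  classical
  have hinv : ∀ z : (Fin (n - m) → ℂ) × (Fin m → ℂ), ∀ g ∈ Γ,
      (∑ i, ((z + g).1 i).im ^ 2) = ∑ i, (z.1 i).im ^ 2 := by
    intro z g hg
    refine Finset.sum_congr rfl fun i _ => ?_
    have h := hreal g hg i
    simp [Complex.add_im, h]
  refine ⟨hinv, ?_⟩
  set f : (Fin (n - m) → ℂ) × (Fin m → ℂ) → ℝ := fun z => ∑ i, (z.1 i).im ^ 2 with hfdef
  have hwd : ∀ a b : (Fin (n - m) → ℂ) × (Fin m → ℂ),
      (QuotientAddGroup.leftRel Γ).r a b → f a = f b := by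
    intro a b hab
    rw [QuotientAddGroup.leftRel_apply] at hab
    have : a + (-a + b) = b := by abel
    calc f a = f (a + (-a + b)) := (hinv a _ hab).symm
    _ = f b := by rw [this]
  set φ : ((Fin (n - m) → ℂ) × (Fin m → ℂ)) ⧸ Γ → ℝ :=
    fun x => Quotient.liftOn' x f hwd with hφdef
  have hφmk : ∀ z, φ (QuotientAddGroup.mk z) = f z := fun z => rfl
  have hfcont : Continuous f := by fun_prop
  have hφcont : Continuous φ :=
    isQuotientMap_quotient_mk'.continuous_iff.mpr hfcont
  have hfnn : ∀ z, 0 ≤ f z := fun z => Finset.sum_nonneg fun i _ => sq_nonneg _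
  have hφnn : ∀ x, 0 ≤ φ x := by
    intro x
    obtain ⟨z, rfl⟩ := QuotientAddGroup.mk_surjective x
    exact hfnn z
  -- basis of F-components
  have hbspan : ⊤ ≤ Submodule.span ℝ (Set.range fun j => (γ j).2) := hspan.ge
  set b : Module.Basis (Fin (2 * m)) ℝ (Fin m → ℂ) := Module.Basis.mk hli hbspan with hbdef
  have hb : ∀ j, b j = (γ j).2 := fun j => Module.Basis.mk_apply hli hbspan j
  have hγΓ : ∀ j, γ j ∈ Γ := by
    intro j
    rw [hΓ]
    exact AddSubgroup.subset_closure (Or.inr ⟨j, rfl⟩)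
  have heΓ : ∀ i : Fin (n - m),
      (((Pi.single i 1 : Fin (n - m) → ℂ), (0 : Fin m → ℂ))
        : (Fin (n - m) → ℂ) × (Fin m → ℂ)) ∈ Γ := by
    intro i
    rw [hΓ]
    exact AddSubgroup.subset_closure (Or.inl ⟨i, rfl⟩)
  -- key compactness
  have hcomp : ∀ c : ℝ, 0 ≤ c → IsCompact {x | φ x ≤ c} := by
    intro c hc
    set A : Set (Fin (n - m) → ℂ) :=
      {u | (∀ i, (u i).re ∈ Set.Icc (0:ℝ) 1) ∧ ∑ i, (u i).im ^ 2 ≤ c} with hAdef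
    set B : Set (Fin m → ℂ) :=
      (fun t : Fin (2 * m) → ℝ => ∑ j, t j • (γ j).2) ''
        (Set.univ.pi fun _ => Set.Icc (0:ℝ) 1) with hBdef
    have hAclosed : IsClosed A := by
      have h1 : IsClosed {u : Fin (n - m) → ℂ | ∀ i, (u i).re ∈ Set.Icc (0:ℝ) 1} := by
        have : {u : Fin (n - m) → ℂ | ∀ i, (u i).re ∈ Set.Icc (0:ℝ) 1} =
            ⋂ i, {u | (u i).re ∈ Set.Icc (0:ℝ) 1} := by
          ext u; simp
        rw [this]
        exact isClosed_iInter fun i =>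
          IsClosed.preimage (by fun_prop) isClosed_Icc
      have h2 : IsClosed {u : Fin (n - m) → ℂ | ∑ i, (u i).im ^ 2 ≤ c} :=
        isClosed_le (by fun_prop) continuous_const
      exact h1.inter h2
    have hAbdd : Bornology.IsBounded A := by
      refine (Metric.isBounded_closedBall (x := (0 : Fin (n - m) → ℂ))
        (r := Real.sqrt (1 + c))).subset ?_
      intro u hu
      rw [Metric.mem_closedBall, dist_zero_right]
      have hr : (0:ℝ) ≤ Real.sqrt (1 + c) := Real.sqrt_nonneg _
      refine (pi_norm_le_iff_of_nonneg hr).mpr fun i => ?_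
      have him : (u i).im ^ 2 ≤ c := by
        calc (u i).im ^ 2 ≤ ∑ k, (u k).im ^ 2 :=
          Finset.single_le_sum (f := fun k => (u k).im ^ 2) (fun k _ => sq_nonneg _) (Finset.mem_univ i)
        _ ≤ c := hu.2
      have hre := hu.1 i
      have hsq : ‖u i‖ ^ 2 ≤ 1 + c := by
        rw [Complex.sq_norm, Complex.normSq_apply]
        nlinarith [hre.1, hre.2]
      exact (Real.le_sqrt (norm_nonneg _) (by linarith)).mpr hsq
    have hAcomp : IsCompact A :=
      Metric.isCompact_of_isClosed_isBounded hAclosed hAbdd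
    have hBcomp : IsCompact B :=
      (isCompact_univ_pi fun _ => isCompact_Icc).image (by fun_prop)
    have hKcomp : IsCompact (A ×ˢ B) := hAcomp.prod hBcomp
    have himg : {x | φ x ≤ c} =
        QuotientAddGroup.mk '' (A ×ˢ B) := by
      apply Set.Subset.antisymm
      · intro x hx
        obtain ⟨z, rfl⟩ := QuotientAddGroup.mk_surjective x
        have hfz : f z ≤ c := hx
        -- reduce the F-component
        set t : Fin (2 * m) → ℝ := fun j => b.repr z.2 j with htdef
        set g₂ : (Fin (n - m) → ℂ) × (Fin m → ℂ) := ∑ j, (⌊t j⌋ : ℤ) • γ j with hg2def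
        have hg₂Γ : g₂ ∈ Γ := sum_mem fun j _ => zsmul_mem (hγΓ j) _
        set w : (Fin (n - m) → ℂ) × (Fin m → ℂ) := z - g₂ with hwdef
        set g₁ : (Fin (n - m) → ℂ) × (Fin m → ℂ) :=
          ∑ i, (⌊(w.1 i).re⌋ : ℤ) •
            (((Pi.single i 1 : Fin (n - m) → ℂ), (0 : Fin m → ℂ))
              : (Fin (n - m) → ℂ) × (Fin m → ℂ)) with hg1def
        have hg₁Γ : g₁ ∈ Γ := sum_mem fun i _ => zsmul_mem (heΓ i) _
        set z' : (Fin (n - m) → ℂ) × (Fin m → ℂ) := w - g₁ with hz'def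
        have hgΓ : g₂ + g₁ ∈ Γ := add_mem hg₂Γ hg₁Γ
        have hz'z : z' = z - (g₂ + g₁) := by rw [hz'def, hwdef]; abel
        have hmk : (QuotientAddGroup.mk z' : _ ⧸ Γ) = QuotientAddGroup.mk z := by
          rw [QuotientAddGroup.eq]
          have : -z' + z = g₂ + g₁ := by rw [hz'z]; abel
          rw [this]; exact hgΓ
        refine ⟨z', ⟨?_, ?_⟩, hmk⟩
        · -- E-component in A
          constructor
          · intro i
            have hg1fst : g₁.1 i = ((⌊(w.1 i).re⌋ : ℤ) : ℂ) := by
              rw [hg1def, Prod.fst_sum]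
              simp only [Prod.smul_fst]
              rw [Finset.sum_apply]
              simp only [Pi.smul_apply, Pi.single_apply, smul_ite, smul_zero,
                Finset.sum_ite_eq, Finset.mem_univ, if_true, zsmul_eq_mul, mul_one]
            have : (z'.1 i).re = Int.fract ((w.1 i).re) := by
              have hz1 : z'.1 i = w.1 i - g₁.1 i := rfl
              rw [hz1, Complex.sub_re, hg1fst, Int.fract]
              simp
            rw [this]
            exact ⟨Int.fract_nonneg _, le_of_lt (Int.fract_lt_one _)⟩
          · have him : ∀ i, (z'.1 i).im = (z.1 i).im := by
              intro i
              have hg2 := hreal _ hg₂Γ i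
              have hg1 := hreal _ hg₁Γ i
              rw [hz'z]
              simp [Complex.sub_im, Complex.add_im, hg2, hg1]
            calc ∑ i, (z'.1 i).im ^ 2 = ∑ i, (z.1 i).im ^ 2 := by
                  refine Finset.sum_congr rfl fun i _ => by rw [him i]
              _ ≤ c := hfz
        · -- F-component in B
          have hg1snd : g₁.2 = 0 := by
            rw [hg1def, Prod.snd_sum]
            simp
          have hg2snd : g₂.2 = ∑ j, (⌊t j⌋ : ℝ) • (γ j).2 := by
            rw [hg2def, Prod.snd_sum]
            refine Finset.sum_congr rfl fun j _ => ?_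
            rw [Prod.smul_snd, Int.cast_smul_eq_zsmul]
          have hz2 : z.2 = ∑ j, t j • (γ j).2 := by
            conv_lhs => rw [← b.sum_repr z.2]
            refine Finset.sum_congr rfl fun j _ => by rw [hb]
          have hz'2 : z'.2 = ∑ j, Int.fract (t j) • (γ j).2 := by
            rw [hz'def, hwdef]
            simp only [Prod.snd_sub, hg1snd, sub_zero, hg2snd, hz2]
            rw [← Finset.sum_sub_distrib]
            refine Finset.sum_congr rfl fun j _ => ?_
            rw [← sub_smul, Int.fract]
          exact ⟨fun j => Int.fract (t j),
            fun j _ => ⟨Int.fract_nonneg _, le_of_lt (Int.fract_lt_one _)⟩, hz'2.symm⟩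
      · rintro x ⟨z, ⟨hzA, _⟩, rfl⟩
        simp only [Set.mem_setOf_eq]
        rw [hφmk]
        exact hzA.2
    rw [himg]
    exact hKcomp.image continuous_quotient_mk'
  refine ⟨φ, hφcont, hφmk, hφnn, hcomp, ?_, ?_⟩
  · intro c hcpos
    refine ⟨isOpen_Iio.preimage hφcont, ?_⟩
    refine IsCompact.of_isClosed_subset (hcomp c hcpos.le) isClosed_closure ?_
    have hsub : {x | φ x < c} ⊆ {x | φ x ≤ c} := Set.setOf_subset_setOf.mpr fun x => le_of_lt
    exact closure_minimal hsub (isClosed_Iic.preimage hφcont)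
  · ext x
    simp only [Set.mem_iUnion, Set.mem_univ, iff_true, Set.mem_setOf_eq, Set.mem_Ioi]
    exact ⟨φ x + 1, by linarith [hφnn x], by linarith⟩
end

section
/- Let 0 < m < n and let Γ ⊆ ℂⁿ be a subgroup all of whose elements have real E-component. Let ℋ : ℂⁿ × ℂⁿ → ℂ be a hermitian form and let ℬ : ℂ^{n−m} × ℂ^{n−m} → ℂ be a symmetric ℂ-bilinear form taking real values on pairs of real vectors. Define ℋ'(z,w) := ℋ(z,w) + ℬ(u_z, conj(u_w)), where u_z denotes the E-component of z and conj is the coordinatewise complex conjugate. Then: (a) ℋ' is a hermitian form on ℂⁿ × ℂⁿ; (b) Im ℋ'(γ,γ') = Im ℋ(γ,γ') for all γ, γ' ∈ Γ; (c) for all z ∈ ℂⁿ and γ ∈ Γ, π·ℋ'(z,γ) + (π/2)·ℋ'(γ,γ) = π·ℋ(z,γ) + (π/2)·ℋ(γ,γ) + (π/2)·(ℬ(u_z + u_γ, u_z + u_γ) − ℬ(u_z, u_z)); (d) Re ℋ'(eᵢ, eⱼ) = Re ℋ(eᵢ, eⱼ) + ℬ(eᵢ, eⱼ) for all standard basis vectors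 eᵢ, eⱼ of ℂ^{n−m} × {0}. In particular, by varying ℬ, the real part of the restriction of ℋ to E × E can be altered to any prescribed real symmetric matrix while changing the normal-form exponents π·ℋ(z,γ) + (π/2)·ℋ(γ,γ) only by the coboundary of z ↦ (π/2)·ℬ(u_z, u_z) and leaving Im ℋ unchanged on Γ × Γ. -/
lemma aux_B_conj {k : ℕ} (B : (Fin k → ℂ) → (Fin k → ℂ) → ℂ)
    (hB_add : ∀ a a' b, B (a + a') b = B a b + B a' b)
    (hB_smul : ∀ (c : ℂ) a b, B (c • a) b = c * B a b)
    (hB_symm : ∀ a b, B a b = B b a)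
    (hB_real : ∀ a b, (∀ i, (a i).im = 0) → (∀ i, (b i).im = 0) → (B a b).im = 0)
    (a b : Fin k → ℂ) :
    starRingEnd ℂ (B a b)
      = B (fun i => starRingEnd ℂ (a i)) (fun i => starRingEnd ℂ (b i)) := by
  have hadd2 : ∀ x y y', B x (y + y') = B x y + B x y' := fun x y y' => by
    rw [hB_symm, hB_add, hB_symm y x, hB_symm y' x]
  have hsmul2 : ∀ (c : ℂ) x y, B x (c • y) = c * B x y := fun c x y => by
    rw [hB_symm, hB_smul, hB_symm]
  set ar : Fin k → ℂ := fun i => ((a i).re : ℂ) with har_def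
  set ai : Fin k → ℂ := fun i => ((a i).im : ℂ) with hai_def
  set br : Fin k → ℂ := fun i => ((b i).re : ℂ) with hbr_def
  set bi : Fin k → ℂ := fun i => ((b i).im : ℂ) with hbi_def
  have ha : a = ar + Complex.I • ai := by
    funext i
    simp only [Pi.add_apply, Pi.smul_apply, smul_eq_mul, har_def, hai_def]
    rw [mul_comm, Complex.re_add_im]
  have hb : b = br + Complex.I • bi := by
    funext i
    simp only [Pi.add_apply, Pi.smul_apply, smul_eq_mul, hbr_def, hbi_def]
    rw [mul_comm, Complex.re_add_im]
  have hca : (fun i => starRingEnd ℂ (a i)) = ar + (-Complex.I) • ai := by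
    funext i
    simp only [Pi.add_apply, Pi.smul_apply, smul_eq_mul, har_def, hai_def]
    apply Complex.ext <;> simp
  have hcb : (fun i => starRingEnd ℂ (b i)) = br + (-Complex.I) • bi := by
    funext i
    simp only [Pi.add_apply, Pi.smul_apply, smul_eq_mul, hbr_def, hbi_def]
    apply Complex.ext <;> simp
  have harr : ∀ i, (ar i).im = 0 := fun i => by simp [har_def]
  have haii : ∀ i, (ai i).im = 0 := fun i => by simp [hai_def]
  have hbrr : ∀ i, (br i).im = 0 := fun i => by simp [hbr_def]
  have hbii : ∀ i, (bi i).im = 0 := fun i => by simp [hbi_def]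
  have hc : ∀ (x y : Fin k → ℂ), (∀ i, (x i).im = 0) → (∀ i, (y i).im = 0) →
      starRingEnd ℂ (B x y) = B x y := fun x y hx hy =>
    Complex.conj_eq_iff_im.mpr (hB_real x y hx hy)
  rw [hca, hcb, ha, hb]
  rw [hB_add, hadd2, hadd2, hB_smul, hB_smul, hsmul2, hsmul2,
    hB_add, hadd2, hadd2, hB_smul, hB_smul, hsmul2, hsmul2]
  simp only [map_add, map_mul, Complex.conj_I,
    hc ar br harr hbrr, hc ar bi harr hbii, hc ai br haii hbrr, hc ai bi haii hbii]

/-- Modifying a hermitian form `ℋ` associated to a line bundle by a symmetric `ℂ`-bilinear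
form `ℬ` with real coefficients on `E × E`: `ℋ'(z,w) = ℋ(z,w) + ℬ(u_z, conj u_w)` is again
hermitian, has the same imaginary part on `Γ × Γ`, changes the normal-form exponents only
by the coboundary of `z ↦ (π/2)ℬ(u_z,u_z)`, and its real part on `E × E` is shifted by
`ℬ`. -/
theorem index_thm_quasi_tori_stmt8
    (n m : ℕ) (hm : 0 < m) (hmn : m < n)
    (Γ : AddSubgroup ((Fin (n - m) → ℂ) × (Fin m → ℂ)))
    (hΓreal : ∀ g ∈ Γ, ∀ i, (g.1 i).im = 0)
    (H : ((Fin (n - m) → ℂ) × (Fin m → ℂ)) → ((Fin (n - m) → ℂ) × (Fin m → ℂ)) → ℂ)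
    (hH_add : ∀ z z' w, H (z + z') w = H z w + H z' w)
    (hH_smul : ∀ (a : ℂ) z w, H (a • z) w = a * H z w)
    (hH_conj : ∀ z w, H w z = starRingEnd ℂ (H z w))
    (B : (Fin (n - m) → ℂ) → (Fin (n - m) → ℂ) → ℂ)
    (hB_add : ∀ a a' b, B (a + a') b = B a b + B a' b)
    (hB_smul : ∀ (c : ℂ) a b, B (c • a) b = c * B a b)
    (hB_symm : ∀ a b, B a b = B b a)
    (hB_real : ∀ a b, (∀ i, (a i).im = 0) → (∀ i, (b i).im = 0) → (B a b).im = 0)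
    (H' : ((Fin (n - m) → ℂ) × (Fin m → ℂ)) → ((Fin (n - m) → ℂ) × (Fin m → ℂ)) → ℂ)
    (hH' : ∀ z w, H' z w = H z w + B z.1 (fun i => starRingEnd ℂ (w.1 i))) :
    -- (a) `ℋ'` is a hermitian form
    ((∀ z z' w, H' (z + z') w = H' z w + H' z' w)
      ∧ (∀ (a : ℂ) z w, H' (a • z) w = a * H' z w)
      ∧ (∀ z w, H' w z = starRingEnd ℂ (H' z w)))
    -- (b) `Im ℋ' = Im ℋ` on `Γ × Γ`
    ∧ (∀ g ∈ Γ, ∀ g' ∈ Γ, (H' g g').im = (H g g').im)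
    -- (c) the normal-form exponents change by a coboundary
    ∧ (∀ z, ∀ g ∈ Γ,
        (Real.pi : ℂ) * H' z g + ((Real.pi : ℂ) / 2) * H' g g
          = (Real.pi : ℂ) * H z g + ((Real.pi : ℂ) / 2) * H g g
            + ((Real.pi : ℂ) / 2) * (B (z.1 + g.1) (z.1 + g.1) - B z.1 z.1))
    -- (d) the real part on `E × E` is shifted by `ℬ`
    ∧ (∀ i j : Fin (n - m),
        (H' ((Pi.single i 1 : Fin (n - m) → ℂ), 0)
            ((Pi.single j 1 : Fin (n - m) → ℂ), 0)).re
          = (H ((Pi.single i 1 : Fin (n - m) → ℂ), 0)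
                ((Pi.single j 1 : Fin (n - m) → ℂ), 0)).re
            + (B (Pi.single i 1) (Pi.single j 1)).re) := by
  have hadd2 : ∀ x y y', B x (y + y') = B x y + B x y' := fun x y y' => by
    rw [hB_symm, hB_add, hB_symm y x, hB_symm y' x]
  have hconjreal : ∀ g ∈ Γ, (fun i => starRingEnd ℂ (g.1 i)) = g.1 := by
    intro g hg
    funext i
    exact Complex.conj_eq_iff_im.mpr (hΓreal g hg i)
  refine ⟨⟨?_, ?_, ?_⟩, ?_, ?_, ?_⟩
  · intro z z' w
    rw [hH', hH', hH', hH_add]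
    have h1 : (z + z').1 = z.1 + z'.1 := rfl
    rw [h1, hB_add]
    ring
  · intro a z w
    rw [hH', hH', hH_smul]
    have h1 : (a • z).1 = a • z.1 := rfl
    rw [h1, hB_smul]
    ring
  · intro z w
    rw [hH' w z, hH' z w, map_add, ← hH_conj,
      aux_B_conj B hB_add hB_smul hB_symm hB_real]
    simp only [Complex.conj_conj]
    rw [hB_symm]
  · intro g hg g' hg'
    rw [hH' g g', hconjreal g' hg', Complex.add_im,
      hB_real g.1 g'.1 (hΓreal g hg) (hΓreal g' hg'), add_zero]
  · intro z g hg
    rw [hH' z g, hH' g g, hconjreal g hg, hB_add, hadd2, hadd2, hB_symm g.1 z.1]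
    ring
  · intro i j
    rw [hH']
    have h1 : (fun k => starRingEnd ℂ ((Pi.single j (1:ℂ) : Fin (n-m) → ℂ) k))
        = Pi.single j 1 := by
      funext k
      simp [Pi.single_apply, apply_ite (starRingEnd ℂ)]
    simp only [h1, Complex.add_re]
end

section
/- Let H be a complex inner product space, let M > 0 and ν ≥ 0 be real numbers, and let λ be a real number with λ ≥ max{M/2, 2ν²/M, 4ν}. Let x, y, w ∈ H satisfy ⟨x,y⟩ = 0, ⟨w,y⟩ = 0 and ‖w‖ ≤ ν·‖y‖. Then λ·‖x‖² + 2·Re⟨x,w⟩ + M·‖y‖² ≥ (M/4)·‖x+y‖². -/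
lemma aux_quad (M ν lam a b : ℝ) (hM : 0 < M) (hν : 0 ≤ ν)
    (ha : 0 ≤ a) (hb : 0 ≤ b)
    (h1 : M / 2 ≤ lam) (h2 : 2 * ν ^ 2 / M ≤ lam) (h3 : 4 * ν ≤ lam) :
    lam * a ^ 2 - 2 * ν * a * b + M * b ^ 2 ≥ (M / 4) * (a ^ 2 + b ^ 2) := by
  have h2' : 2 * ν ^ 2 ≤ lam * M := by
    have := (div_le_iff₀ hM).mp h2
    linarith
  have hA : 0 < lam - M / 4 := by linarith
  have key : ν ^ 2 ≤ (lam - M / 4) * (3 * M / 4) := by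
    rcases le_or_gt ν (M / 4) with hc | hc
    · nlinarith
    rcases le_or_gt ν M with hd | hd
    · nlinarith [sq_nonneg (ν - M / 4), sq_nonneg (ν - M)]
    · nlinarith [sq_nonneg ν, sq_nonneg (ν - M)]
  nlinarith [sq_nonneg ((lam - M / 4) * a - ν * b), mul_nonneg ha hb, sq_nonneg b,
    mul_nonneg (mul_nonneg hA.le hb) hb]

/-- The completing-the-square estimate for the tame curvature term: if `⟨x,y⟩ = 0`,
`⟨w,y⟩ = 0`, `‖w‖ ≤ ν‖y‖` and `λ ≥ max{M/2, 2ν²/M, 4ν}` with `M > 0`, `ν ≥ 0`, then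
`λ‖x‖² + 2Re⟨x,w⟩ + M‖y‖² ≥ (M/4)‖x+y‖²`. -/
theorem index_thm_quasi_tori_stmt13
    {H : Type*} [NormedAddCommGroup H] [InnerProductSpace ℂ H]
    (M ν lam : ℝ) (hM : 0 < M) (hν : 0 ≤ ν)
    (hlam : lam ≥ max (max (M / 2) (2 * ν ^ 2 / M)) (4 * ν))
    (x y w : H)
    (hxy : (inner ℂ x y : ℂ) = 0) (hwy : (inner ℂ w y : ℂ) = 0)
    (hw : ‖w‖ ≤ ν * ‖y‖) :
    lam * ‖x‖ ^ 2 + 2 * (inner ℂ x w : ℂ).re + M * ‖y‖ ^ 2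
      ≥ (M / 4) * ‖x + y‖ ^ 2 := by
  have h1 : M / 2 ≤ lam := le_trans (le_max_left _ _) (le_trans (le_max_left _ _) hlam)
  have h2 : 2 * ν ^ 2 / M ≤ lam := le_trans (le_max_right _ _) (le_trans (le_max_left _ _) hlam)
  have h3 : 4 * ν ≤ lam := le_trans (le_max_right _ _) hlam
  have hpyth : ‖x + y‖ ^ 2 = ‖x‖ ^ 2 + ‖y‖ ^ 2 := by
    have := @norm_add_sq ℂ _ _ _ _ x y
    rw [hxy] at this
    simpa using this
  have hre : -(‖x‖ * ‖w‖) ≤ (inner ℂ x w : ℂ).re := by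
    have h := abs_le.mp (Complex.abs_re_le_norm (inner ℂ x w : ℂ))
    have h2 : ‖(inner ℂ x w : ℂ)‖ ≤ ‖x‖ * ‖w‖ := by
      simpa using norm_inner_le_norm (𝕜 := ℂ) x w
    linarith [h.1]
  have hxw : -(ν * ‖x‖ * ‖y‖) ≤ (inner ℂ x w : ℂ).re := by
    have : ‖x‖ * ‖w‖ ≤ ‖x‖ * (ν * ‖y‖) := mul_le_mul_of_nonneg_left hw (norm_nonneg x)
    nlinarith
  have := aux_quad M ν lam ‖x‖ ‖y‖ hM hν (norm_nonneg x) (norm_nonneg y) h1 h2 h3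
  rw [hpyth]
  nlinarith
end

section
/- Let Γ be a discrete subgroup of ℂⁿ and let π : ℂⁿ → ℂⁿ/Γ be the quotient map onto the quotient topological group. Then K := π(span_ℝ Γ) is a compact subgroup of ℂⁿ/Γ, and every compact subgroup of ℂⁿ/Γ is contained in K; i.e., K = ℝΓ/Γ is the maximal compact subgroup of the quasi-torus ℂⁿ/Γ. -/
open Set Submodule

/-- For a discrete subgroup `Γ ⊆ ℂⁿ`, the image `K = ℝΓ/Γ` of the real span of `Γ` in the
quasi-torus `X = ℂⁿ/Γ` is a compact subgroup containing every compact subgroup of `X`,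
i.e. it is the maximal compact subgroup of `X`. -/
theorem index_thm_quasi_tori_stmt14
    (n : ℕ) (Γ : AddSubgroup (Fin n → ℂ)) [DiscreteTopology Γ]
    (K : AddSubgroup ((Fin n → ℂ) ⧸ Γ))
    (hK : K = AddSubgroup.map (QuotientAddGroup.mk' Γ)
      ((Submodule.span ℝ (Γ : Set (Fin n → ℂ))).toAddSubgroup)) :
    IsCompact (K : Set ((Fin n → ℂ) ⧸ Γ))
    ∧ ∀ H : AddSubgroup ((Fin n → ℂ) ⧸ Γ),
        IsCompact (H : Set ((Fin n → ℂ) ⧸ Γ)) → H ≤ K := by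
  classical
  set V := Fin n → ℂ with hV
  set E : Submodule ℝ V := Submodule.span ℝ (Γ : Set V) with hE
  have hΓE : (Γ : Set V) ⊆ (E : Set V) := Submodule.subset_span
  -- the lattice inside `E`
  set L : Submodule ℤ E :=
    (AddSubgroup.toIntSubmodule Γ).comap (E.subtype.restrictScalars ℤ) with hL
  have hmemL : ∀ x : E, x ∈ L ↔ (x : V) ∈ Γ := fun x => Iff.rfl
  haveI : DiscreteTopology L := by
    have hemb : Topology.IsEmbedding (fun x : L => (⟨(x : E), x.2⟩ : Γ)) := by
      refine Topology.IsEmbedding.of_comp (Continuous.subtype_mk (by fun_prop) _)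
        continuous_subtype_val ?_
      show Topology.IsEmbedding (fun x : L => ((x : E) : V))
      exact Topology.IsEmbedding.subtypeVal.comp Topology.IsEmbedding.subtypeVal
    exact hemb.discreteTopology
  haveI : IsZLattice ℝ L := by
    constructor
    apply Submodule.map_injective_of_injective (f := E.subtype) E.injective_subtype
    rw [Submodule.map_span, Submodule.map_top, Submodule.range_subtype]
    have : E.subtype '' (L : Set E) = (Γ : Set V) := by
      ext v
      constructor
      · rintro ⟨x, hx, rfl⟩; exact hx
      · intro hv; exact ⟨⟨v, hΓE hv⟩, hv, rfl⟩
    rw [this, hE]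
  haveI : Module.Finite ℤ L := ZLattice.module_finite ℝ L
  haveI : Module.Free ℤ L := ZLattice.module_free ℝ L
  set b0 := Module.Free.chooseBasis ℤ L with hb0
  set b := Module.Basis.ofZLatticeBasis ℝ L b0 with hb
  have hspan : span ℤ (Set.range b) = L := b0.ofZLatticeBasis_span ℝ
  -- compactness of K
  have hcompact : IsCompact (K : Set ((Fin n → ℂ) ⧸ Γ)) := by
    set D : Set E := ZSpan.fundamentalDomain b with hD
    have hDb : Bornology.IsBounded D := ZSpan.fundamentalDomain_isBounded b
    have hC : IsCompact (closure D) := hDb.isCompact_closure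
    have hmkc : Continuous (fun x : E => ((x : V) : V ⧸ Γ)) :=
      continuous_quot_mk.comp continuous_subtype_val
    have himg : IsCompact ((fun x : E => ((x : V) : V ⧸ Γ)) '' closure D) :=
      hC.image hmkc
    have hset : (K : Set (V ⧸ Γ)) = (fun x : E => ((x : V) : V ⧸ Γ)) '' closure D := by
      apply Set.Subset.antisymm
      · rintro x hx
        rw [hK] at hx
        obtain ⟨v, hv, rfl⟩ := hx
        have hvE : v ∈ E := hv
        obtain ⟨w, hw, -⟩ := ZSpan.exist_unique_vadd_mem_fundamentalDomain b (⟨v, hvE⟩ : E)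
        refine ⟨w +ᵥ (⟨v, hvE⟩ : E), subset_closure hw, ?_⟩
        have hwL : (w : E) ∈ L := (le_of_eq hspan) w.2
        have hwΓ : ((w : E) : V) ∈ Γ := hwL
        show (((w : E) : V) + v : V ⧸ Γ) = QuotientAddGroup.mk' Γ v
        rw [QuotientAddGroup.mk'_apply, add_comm]
        exact (QuotientAddGroup.mk_add_of_mem v hwΓ)
      · rintro x ⟨y, -, rfl⟩
        rw [hK]
        exact ⟨(y : V), y.2, rfl⟩
    rw [hset]
    exact himg
  refine ⟨hcompact, ?_⟩
  -- maximality
  obtain ⟨F, hF⟩ := Submodule.exists_isCompl E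
  set p : V →ₗ[ℝ] F := F.linearProjOfIsCompl E hF.symm with hp
  have hker : LinearMap.ker p = E := Submodule.linearProjOfIsCompl_ker hF.symm
  have hpcont : Continuous p := p.continuous_of_finiteDimensional
  have hp0 : ∀ x ∈ Γ, p x = 0 := by
    intro x hx
    have : x ∈ LinearMap.ker p := by rw [hker]; exact hΓE hx
    exact this
  set φ : V ⧸ Γ →+ F :=
    QuotientAddGroup.lift Γ p.toAddMonoidHom hp0 with hφ
  have hφcont : Continuous φ := by
    refine (QuotientAddGroup.isQuotientMap_mk Γ).continuous_iff.mpr ?_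
    have : (φ ∘ QuotientAddGroup.mk) = fun v : V => p v := by
      funext v; rfl
    rw [this]
    exact hpcont
  intro H hH
  intro h hh
  have hbd : Bornology.IsBounded (φ '' (H : Set (V ⧸ Γ))) :=
    (hH.image hφcont).isBounded
  obtain ⟨C, hC⟩ := isBounded_iff_forall_norm_le.mp hbd
  have hnorm : ∀ m : ℕ, (m : ℝ) * ‖φ h‖ ≤ C := by
    intro m
    have hmem : φ (m • h) ∈ φ '' (H : Set (V ⧸ Γ)) :=
      ⟨m • h, H.nsmul_mem hh m, rfl⟩
    have := hC _ hmem
    rwa [map_nsmul, RCLike.norm_nsmul ℝ, nsmul_eq_mul] at this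
  have hzero : φ h = 0 := by
    by_contra hne
    have hpos : 0 < ‖φ h‖ := norm_pos_iff.mpr hne
    obtain ⟨m, hm⟩ := exists_nat_gt (C / ‖φ h‖)
    have := hnorm m
    have : (m : ℝ) ≤ C / ‖φ h‖ := (le_div_iff₀ hpos).mpr this
    linarith
  obtain ⟨v, rfl⟩ := QuotientAddGroup.mk_surjective h
  have hvE : v ∈ E := by
    rw [← hker]
    have : φ ((v : V) : V ⧸ Γ) = p v := rfl
    rw [LinearMap.mem_ker, ← this]
    exact hzero
  rw [hK]
  exact ⟨v, hvE, rfl⟩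
end
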